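/- Let E be a real inner product space, D a finite set with |D| = N, and f_n : E → ℝ differentiable for n ∈ D with global loss F(w) = (1/N)·∑_{n∈D} f_n(w). Assume F is μ-strongly convex and L-smooth with 0 < μ ≤ L, the sample-gradient bound ‖∇f_n(w)‖² ≤ ξ1 + ξ2·‖∇F(w)‖² holds for all n ∈ D and w ∈ E (ξ1 ≥ 0, ξ2 > 0), and w* is a global minimizer of F. Let N_f, N_c be positive integers with N_f ≤ N, N_c ≤ N, set A = N_f·(N−N_f) + N_c·(N−N_c) > 0, and assume ξ2 ≤ (N_f+N_c)²/(4A). Let S_f, S_c ⊆ D with |S_f| = N_f and |S_c| = N_c, and set a1 = N_f/(N_f+N_c), a2 = N_c/(N_f+N_c), g^f = (1/N_f)·∑_{n∈S_f} ∇f_n(w), g^c = (1/N_c)·∑_{n∈S_c} ∇f_n(w). Let ĝ^f ∈ E satisfy ‖g^f − ĝ^f‖² ≤ ε with ε ≥ 0, and let w⁺ = w − (1/L)·(a1·ĝ^f + a2·g^c). Then F(w⁺) − F(w*) ≤ ρ1·(F(w) − F(w*)) + ρ2 + (a1²/L)·ε, where ρ1 = 1 − μ/L + 4μξ2·A/(L·(N_f+N_c)²)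 and ρ2 = 2ξ1·A/(L·(N_f+N_c)²). -/

import Mathlib

local notation "⟪" x ", " y "⟫" => @inner ℝ _ _ x y


lemma subset_sum_sq_bound {E : Type*} [NormedAddCommGroup E] [InnerProductSpace ℝ E]
    {ι : Type*} (D S : Finset ι) (hS : S ⊆ D) (x : ι → E)
    (hx : ∑ n ∈ D, x n = 0) :
    (D.card : ℝ) * ‖∑ n ∈ S, x n‖ ^ 2 ≤
      (S.card : ℝ) * ((D.card : ℝ) - S.card) * ∑ n ∈ D, ‖x n‖ ^ 2 := by
  rcases Nat.eq_zero_or_pos D.card with h0 | hpos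
  · have hD : D = ∅ := Finset.card_eq_zero.mp h0
    subst hD
    have hSe : S = ∅ := Finset.subset_empty.mp hS
    subst hSe; simp
  classical
  have hNn : (0:ℝ) < (D.card : ℝ) := by exact_mod_cast hpos
  set Nn : ℝ := (D.card : ℝ) with hNndef
  set s : ℝ := (S.card : ℝ) with hsdef
  have hsN : s ≤ Nn := by simp only [hsdef, hNndef]; exact_mod_cast Finset.card_le_card hS
  have hs0 : 0 ≤ s := by positivity
  set c : ι → ℝ := fun n => if n ∈ S then 1 - s / Nn else -(s / Nn) with hc
  have key : ∑ n ∈ S, x n = ∑ n ∈ D, c n • x n := by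
    have h1 : ∀ n, c n • x n = (if n ∈ S then x n else 0) - (s / Nn) • x n := by
      intro n; by_cases h : n ∈ S <;> simp [hc, h, sub_smul, one_smul, neg_smul]
    rw [Finset.sum_congr rfl (fun n _ => h1 n), Finset.sum_sub_distrib, ← Finset.smul_sum, hx,
      smul_zero, sub_zero, Finset.sum_ite_mem, Finset.inter_eq_right.mpr hS]
  have h1 : ‖∑ n ∈ S, x n‖ ≤ ∑ n ∈ D, |c n| * ‖x n‖ := by
    rw [key]
    refine (norm_sum_le _ _).trans_eq ?_
    simp [norm_smul, Real.norm_eq_abs]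
  have h2 : (∑ n ∈ D, |c n| * ‖x n‖) ^ 2 ≤ (∑ n ∈ D, |c n| ^ 2) * ∑ n ∈ D, ‖x n‖ ^ 2 :=
    Finset.sum_mul_sq_le_sq_mul_sq D _ _
  have h3 : ∑ n ∈ D, |c n| ^ 2 = s * (Nn - s) / Nn := by
    have hsplit : ∑ n ∈ D, |c n| ^ 2 = ∑ n ∈ D \ S, |c n| ^ 2 + ∑ n ∈ S, |c n| ^ 2 :=
      (Finset.sum_sdiff hS).symm
    have hS1 : ∑ n ∈ S, |c n| ^ 2 = s * (1 - s / Nn) ^ 2 := by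
      calc ∑ n ∈ S, |c n| ^ 2 = ∑ _n ∈ S, (1 - s / Nn) ^ 2 :=
            Finset.sum_congr rfl (fun n hn => by simp [hc, hn, sq_abs])
        _ = s * (1 - s / Nn) ^ 2 := by rw [Finset.sum_const, nsmul_eq_mul, hsdef]
    have hS2 : ∑ n ∈ D \ S, |c n| ^ 2 = (Nn - s) * (s / Nn) ^ 2 := by
      calc ∑ n ∈ D \ S, |c n| ^ 2 = ∑ _n ∈ D \ S, (s / Nn) ^ 2 :=
            Finset.sum_congr rfl (fun n hn => by
              have hns : n ∉ S := (Finset.mem_sdiff.mp hn).2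
              simp [hc, hns, sq_abs])
        _ = (Nn - s) * (s / Nn) ^ 2 := by
            rw [Finset.sum_const, nsmul_eq_mul, Finset.card_sdiff_of_subset hS,
              Nat.cast_sub (Finset.card_le_card hS)]
    rw [hsplit, hS1, hS2]
    field_simp
    ring
  have hsum_nn : (0:ℝ) ≤ ∑ n ∈ D, ‖x n‖ ^ 2 := Finset.sum_nonneg fun n _ => sq_nonneg _
  have h4 : ‖∑ n ∈ S, x n‖ ^ 2 ≤ (s * (Nn - s) / Nn) * ∑ n ∈ D, ‖x n‖ ^ 2 := by
    calc ‖∑ n ∈ S, x n‖ ^ 2 ≤ (∑ n ∈ D, |c n| * ‖x n‖) ^ 2 := by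
          have hrhs : (0:ℝ) ≤ ∑ n ∈ D, |c n| * ‖x n‖ :=
            Finset.sum_nonneg fun n _ => mul_nonneg (abs_nonneg _) (norm_nonneg _)
          nlinarith [norm_nonneg (∑ n ∈ S, x n)]
      _ ≤ (∑ n ∈ D, |c n| ^ 2) * ∑ n ∈ D, ‖x n‖ ^ 2 := h2
      _ = (s * (Nn - s) / Nn) * ∑ n ∈ D, ‖x n‖ ^ 2 := by rw [h3]
  calc Nn * ‖∑ n ∈ S, x n‖ ^ 2 ≤ Nn * ((s * (Nn - s) / Nn) * ∑ n ∈ D, ‖x n‖ ^ 2) := by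
        exact mul_le_mul_of_nonneg_left h4 hNn.le
    _ = s * (Nn - s) * ∑ n ∈ D, ‖x n‖ ^ 2 := by field_simp

lemma gradient_avg {E : Type*} [NormedAddCommGroup E] [InnerProductSpace ℝ E] [CompleteSpace E]
    {ι : Type*} (D : Finset ι) (f : ι → E → ℝ) (hf : ∀ n ∈ D, Differentiable ℝ (f n))
    (F : E → ℝ) (c : ℝ) (hF : ∀ w : E, F w = c * ∑ n ∈ D, f n w) (y : E) :
    gradient F y = c • ∑ n ∈ D, gradient (f n) y := by
  have hFun : F = fun z => c * ∑ n ∈ D, f n z := funext hF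
  have hsum : HasFDerivAt (fun z => ∑ n ∈ D, f n z) (∑ n ∈ D, fderiv ℝ (f n) y) y :=
    HasFDerivAt.fun_sum (fun n hn => ((hf n hn) y).hasFDerivAt)
  have hfd : HasFDerivAt F (c • ∑ n ∈ D, fderiv ℝ (f n) y) y := by
    rw [hFun]
    simpa using hsum.const_mul c
  have hgr := (hasFDerivAt_iff_hasGradientAt.mp hfd).gradient
  rw [hgr, map_smul, map_sum]
  rfl

set_option maxHeartbeats 1600000 in
/-- One-round contraction underlying Theorem 1 (SemiFL): with the hybrid update
`w⁺ = w − (1/L)·(a1·ĝ^f + a2·g^c)`, where the aggregated federated gradient `ĝ^f`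
has distortion `‖g^f − ĝ^f‖² ≤ ε`, the optimality gap contracts as
`F(w⁺) − F(w*) ≤ ρ1·(F(w) − F(w*)) + ρ2 + (a1²/L)·ε`. -/
theorem semifl_one_round_contraction
    {E : Type*} [NormedAddCommGroup E] [InnerProductSpace ℝ E] [CompleteSpace E]
    {ι : Type*} (D : Finset ι) (N : ℕ) (hN : D.card = N)
    (f : ι → E → ℝ) (hf : ∀ n ∈ D, Differentiable ℝ (f n))
    (F : E → ℝ) (hF : ∀ w : E, F w = (1 / (N : ℝ)) * ∑ n ∈ D, f n w)
    (μ L : ℝ) (hμ : 0 < μ) (hμL : μ ≤ L)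
    (hsc : ∀ w w' : E,
      F w ≥ F w' + ⟪w - w', gradient F w'⟫ + μ / 2 * ‖w - w'‖ ^ 2)
    (hsm : ∀ w w' : E,
      F w ≤ F w' + ⟪w - w', gradient F w'⟫ + L / 2 * ‖w - w'‖ ^ 2)
    (ξ1 ξ2 : ℝ) (hξ1 : 0 ≤ ξ1) (hξ2 : 0 < ξ2)
    (hgradbound : ∀ n ∈ D, ∀ w : E,
      ‖gradient (f n) w‖ ^ 2 ≤ ξ1 + ξ2 * ‖gradient F w‖ ^ 2)
    (wstar : E) (hmin : ∀ w : E, F wstar ≤ F w)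
    (Nf Nc : ℕ) (hNf : 0 < Nf) (hNc : 0 < Nc) (hNfN : Nf ≤ N) (hNcN : Nc ≤ N)
    (A : ℝ) (hA : A = (Nf : ℝ) * ((N : ℝ) - Nf) + (Nc : ℝ) * ((N : ℝ) - Nc))
    (hApos : 0 < A)
    (hξ2A : ξ2 ≤ ((Nf : ℝ) + Nc) ^ 2 / (4 * A))
    (Sf Sc : Finset ι) (hSfD : Sf ⊆ D) (hScD : Sc ⊆ D)
    (hSf : Sf.card = Nf) (hSc : Sc.card = Nc)
    (w : E)
    (a1 a2 : ℝ) (ha1 : a1 = (Nf : ℝ) / ((Nf : ℝ) + Nc))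
    (ha2 : a2 = (Nc : ℝ) / ((Nf : ℝ) + Nc))
    (gf gc : E)
    (hgf : gf = (1 / (Nf : ℝ)) • ∑ n ∈ Sf, gradient (f n) w)
    (hgc : gc = (1 / (Nc : ℝ)) • ∑ n ∈ Sc, gradient (f n) w)
    (gfhat : E) (ε : ℝ) (hε : 0 ≤ ε) (hagg : ‖gf - gfhat‖ ^ 2 ≤ ε)
    (ρ1 ρ2 : ℝ)
    (hρ1 : ρ1 = 1 - μ / L + 4 * μ * ξ2 * A / (L * ((Nf : ℝ) + Nc) ^ 2))
    (hρ2 : ρ2 = 2 * ξ1 * A / (L * ((Nf : ℝ) + Nc) ^ 2)) :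
    F (w - (1 / L) • (a1 • gfhat + a2 • gc)) - F wstar ≤
      ρ1 * (F w - F wstar) + ρ2 + a1 ^ 2 / L * ε := by
  have hL : 0 < L := lt_of_lt_of_le hμ hμL
  have hNfR : (0:ℝ) < (Nf:ℝ) := by exact_mod_cast hNf
  have hNcR : (0:ℝ) < (Nc:ℝ) := by exact_mod_cast hNc
  have hK : (0:ℝ) < (Nf:ℝ) + Nc := by linarith
  have hNpos : 0 < N := lt_of_lt_of_le hNf hNfN
  have hNR : (0:ℝ) < (N:ℝ) := by exact_mod_cast hNpos
  set g := gradient F w with hg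
  clear_value g
  have hgradF : gradient F w = (1/(N:ℝ)) • ∑ n ∈ D, gradient (f n) w :=
    gradient_avg D f hf F _ hF w
  have hsumD : ∑ n ∈ D, gradient (f n) w = (N:ℝ) • g := by
    rw [hg, hgradF, smul_smul, mul_one_div, div_self hNR.ne', one_smul]
  set x : ι → E := fun n => gradient (f n) w - g with hx
  clear_value x
  have hxsum : ∑ n ∈ D, x n = 0 := by
    simp only [hx]
    rw [Finset.sum_sub_distrib, hsumD, Finset.sum_const, hN, ← Nat.cast_smul_eq_nsmul ℝ,
      sub_self]
  set G2 : ℝ := ξ1 + ξ2 * ‖g‖ ^ 2 with hG2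
  clear_value G2
  have hG2nn : 0 ≤ G2 := hG2 ▸ add_nonneg hξ1 (mul_nonneg hξ2.le (sq_nonneg _))
  -- total variance bound
  have hxbound : ∑ n ∈ D, ‖x n‖ ^ 2 ≤ (N:ℝ) * G2 := by
    have e1 : ∀ n ∈ D, ‖x n‖ ^ 2
        = ‖gradient (f n) w‖ ^ 2 - 2 * ⟪gradient (f n) w, g⟫ + ‖g‖ ^ 2 := by
      intro n _
      simp only [hx]
      exact norm_sub_sq_real _ _
    rw [Finset.sum_congr rfl e1, Finset.sum_add_distrib, Finset.sum_sub_distrib,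
      Finset.sum_const, hN]
    have e2 : ∑ n ∈ D, 2 * ⟪gradient (f n) w, g⟫ = 2 * ((N:ℝ) * ‖g‖ ^ 2) := by
      rw [← Finset.mul_sum, ← sum_inner, hsumD, real_inner_smul_left,
        real_inner_self_eq_norm_sq]
    rw [e2]
    have hge : ξ1 + ξ2 * ‖gradient F w‖ ^ 2 = G2 := by rw [hG2, hg]
    have e3 : ∑ n ∈ D, ‖gradient (f n) w‖ ^ 2 ≤ (N:ℝ) * G2 :=
      (Finset.sum_le_sum (fun n hn => (hgradbound n hn w).trans_eq hge)).trans_eq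
        (by rw [Finset.sum_const, hN, nsmul_eq_mul])
    simp only [nsmul_eq_mul]
    linarith [e3, mul_nonneg hNR.le (sq_nonneg ‖g‖)]
  -- subset deviation bound
  have hdev : ∀ (S : Finset ι) (m : ℕ), S ⊆ D → S.card = m →
      ‖∑ n ∈ S, x n‖ ^ 2 ≤ (m:ℝ) * ((N:ℝ) - m) * G2 := by
    intro S m hSD hcard
    have hmN : (m:ℝ) ≤ (N:ℝ) := by
      have := Finset.card_le_card hSD
      rw [hcard, hN] at this
      exact_mod_cast this
    have h1 := subset_sum_sq_bound D S hSD x hxsum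
    rw [hN, hcard] at h1
    have hmm : (0:ℝ) ≤ (m:ℝ) * ((N:ℝ) - m) :=
      mul_nonneg (Nat.cast_nonneg m) (by linarith)
    have h3 : (m:ℝ) * ((N:ℝ) - m) * (∑ n ∈ D, ‖x n‖ ^ 2)
        ≤ (m:ℝ) * ((N:ℝ) - m) * ((N:ℝ) * G2) := mul_le_mul_of_nonneg_left hxbound hmm
    nlinarith [h1, h3, hNR]
  have hu : ‖∑ n ∈ Sf, x n‖ ^ 2 ≤ (Nf:ℝ) * ((N:ℝ) - Nf) * G2 := hdev Sf Nf hSfD hSf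
  have hv : ‖∑ n ∈ Sc, x n‖ ^ 2 ≤ (Nc:ℝ) * ((N:ℝ) - Nc) * G2 := hdev Sc Nc hScD hSc
  -- the averaged hybrid direction deviation
  have ha1nn : 0 ≤ a1 := by rw [ha1]; positivity
  have eS : ∀ (S : Finset ι) (m : ℕ), S.card = m →
      ∑ n ∈ S, gradient (f n) w = (∑ n ∈ S, x n) + (m:ℝ) • g := by
    intro S m hcard
    simp only [hx]
    rw [Finset.sum_sub_distrib, Finset.sum_const, hcard, ← Nat.cast_smul_eq_nsmul ℝ,
      sub_add_cancel]
  have hbarA : ‖a1 • gf + a2 • gc - g‖ ^ 2 ≤ (2*A/((Nf:ℝ)+Nc)^2) * G2 := by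
    have c1 : (Nf:ℝ)/((Nf:ℝ)+Nc) * (1/(Nf:ℝ)) = 1/((Nf:ℝ)+Nc) := by
      field_simp
    have c2 : (Nc:ℝ)/((Nf:ℝ)+Nc) * (1/(Nc:ℝ)) = 1/((Nf:ℝ)+Nc) := by
      field_simp
    have hA1 : a1 • gf = (1/((Nf:ℝ)+Nc)) • (∑ n ∈ Sf, x n) + ((Nf:ℝ)/((Nf:ℝ)+Nc)) • g := by
      rw [ha1, hgf, smul_smul, c1, eS Sf Nf hSf, smul_add, smul_smul, one_div_mul_eq_div]
    have hA2 : a2 • gc = (1/((Nf:ℝ)+Nc)) • (∑ n ∈ Sc, x n) + ((Nc:ℝ)/((Nf:ℝ)+Nc)) • g := by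
      rw [ha2, hgc, smul_smul, c2, eS Sc Nc hSc, smul_add, smul_smul, one_div_mul_eq_div]
    have hgsum : ((Nf:ℝ)/((Nf:ℝ)+Nc)) • g + ((Nc:ℝ)/((Nf:ℝ)+Nc)) • g = g := by
      rw [← add_smul, ← add_div, div_self hK.ne', one_smul]
    have e : a1 • gf + a2 • gc - g
        = (1/((Nf:ℝ)+Nc)) • ((∑ n ∈ Sf, x n) + (∑ n ∈ Sc, x n)) := by
      rw [hA1, hA2,
        show (1/((Nf:ℝ)+Nc)) • (∑ n ∈ Sf, x n) + ((Nf:ℝ)/((Nf:ℝ)+Nc)) • g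
            + ((1/((Nf:ℝ)+Nc)) • (∑ n ∈ Sc, x n) + ((Nc:ℝ)/((Nf:ℝ)+Nc)) • g) - g
          = ((1/((Nf:ℝ)+Nc)) • (∑ n ∈ Sf, x n) + (1/((Nf:ℝ)+Nc)) • (∑ n ∈ Sc, x n))
            + ((((Nf:ℝ)/((Nf:ℝ)+Nc)) • g + ((Nc:ℝ)/((Nf:ℝ)+Nc)) • g) - g) from by abel,
        hgsum, sub_self, add_zero, smul_add]
    rw [e, norm_smul, mul_pow, Real.norm_eq_abs,
      abs_of_pos (by positivity : (0:ℝ) < 1/((Nf:ℝ)+Nc))]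
    have htri := norm_add_le (∑ n ∈ Sf, x n) (∑ n ∈ Sc, x n)
    have hUV : ‖(∑ n ∈ Sf, x n) + (∑ n ∈ Sc, x n)‖ ^ 2
        ≤ 2 * ‖∑ n ∈ Sf, x n‖ ^ 2 + 2 * ‖∑ n ∈ Sc, x n‖ ^ 2 := by
      have hsq : ‖(∑ n ∈ Sf, x n) + (∑ n ∈ Sc, x n)‖ ^ 2
          ≤ (‖∑ n ∈ Sf, x n‖ + ‖∑ n ∈ Sc, x n‖) ^ 2 :=
        pow_le_pow_left₀ (norm_nonneg _) htri 2
      nlinarith [hsq, sq_nonneg (‖∑ n ∈ Sf, x n‖ - ‖∑ n ∈ Sc, x n‖)]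
    calc (1/((Nf:ℝ)+Nc)) ^ 2 * ‖(∑ n ∈ Sf, x n) + (∑ n ∈ Sc, x n)‖ ^ 2
        ≤ (1/((Nf:ℝ)+Nc)) ^ 2
          * (2 * ((Nf:ℝ) * ((N:ℝ) - Nf) * G2) + 2 * ((Nc:ℝ) * ((N:ℝ) - Nc) * G2)) := by
          refine mul_le_mul_of_nonneg_left ?_ (by positivity)
          linarith [hUV, hu, hv]
      _ = (2*A/((Nf:ℝ)+Nc)^2) * G2 := by rw [hA]; field_simp
  -- total deviation of the implemented direction
  set ghat := a1 • gfhat + a2 • gc with hghat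
  have hdevtot : ‖ghat - g‖ ^ 2 ≤ (4*A/((Nf:ℝ)+Nc)^2) * G2 + 2*a1^2*ε := by
    have e : ghat - g = (a1 • gf + a2 • gc - g) - a1 • (gf - gfhat) := by
      rw [hghat, smul_sub]; abel
    rw [e]
    have htri := norm_sub_le (a1 • gf + a2 • gc - g) (a1 • (gf - gfhat))
    have h2 : ‖a1 • (gf - gfhat)‖ ^ 2 = a1 ^ 2 * ‖gf - gfhat‖ ^ 2 := by
      rw [norm_smul, mul_pow, Real.norm_eq_abs, sq_abs]
    have h3 : a1 ^ 2 * ‖gf - gfhat‖ ^ 2 ≤ a1 ^ 2 * ε :=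
      mul_le_mul_of_nonneg_left hagg (sq_nonneg a1)
    have hsq : ‖(a1 • gf + a2 • gc - g) - a1 • (gf - gfhat)‖ ^ 2
        ≤ (‖a1 • gf + a2 • gc - g‖ + ‖a1 • (gf - gfhat)‖) ^ 2 :=
      pow_le_pow_left₀ (norm_nonneg _) htri 2
    have h4 : (‖a1 • gf + a2 • gc - g‖ + ‖a1 • (gf - gfhat)‖) ^ 2
        ≤ 2 * ‖a1 • gf + a2 • gc - g‖ ^ 2 + 2 * ‖a1 • (gf - gfhat)‖ ^ 2 := by
      nlinarith [sq_nonneg (‖a1 • gf + a2 • gc - g‖ - ‖a1 • (gf - gfhat)‖)]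
    have h5 : ‖a1 • (gf - gfhat)‖ ^ 2 ≤ a1 ^ 2 * ε := h2 ▸ h3
    have e27 : (4*A/((Nf:ℝ)+Nc)^2) * G2 = 2*((2*A/((Nf:ℝ)+Nc)^2) * G2) := by ring
    linarith [hsq, h4, h5, hbarA, e27]
  -- descent lemma
  have hdesc : F (w - (1/L) • ghat) ≤ F w - 1/(2*L) * ‖g‖ ^ 2 + 1/(2*L) * ‖ghat - g‖ ^ 2 := by
    have h := hsm (w - (1/L) • ghat) w
    rw [← hg] at h
    have e1 : w - (1/L) • ghat - w = -((1/L) • ghat) := by abel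
    rw [e1] at h
    have e2 : ⟪-((1/L) • ghat), g⟫ = -((1/L) * ⟪ghat, g⟫) := by
      rw [inner_neg_left, real_inner_smul_left]
    have e3 : ‖-((1/L) • ghat)‖ ^ 2 = (1/L) ^ 2 * ‖ghat‖ ^ 2 := by
      rw [norm_neg, norm_smul, mul_pow, Real.norm_eq_abs, sq_abs]
    rw [e2, e3] at h
    have e4 : ‖ghat - g‖ ^ 2 = ‖ghat‖ ^ 2 - 2 * ⟪ghat, g⟫ + ‖g‖ ^ 2 := norm_sub_sq_real _ _
    have e5 : L / 2 * ((1/L) ^ 2 * ‖ghat‖ ^ 2) = 1/(2*L) * ‖ghat‖ ^ 2 := by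
      field_simp
    rw [e5] at h
    have e7 : 1/(2*L) * ‖ghat - g‖ ^ 2
        = 1/(2*L) * ‖ghat‖ ^ 2 - 1/L * ⟪ghat, g⟫ + 1/(2*L) * ‖g‖ ^ 2 := by
      rw [e4]; field_simp
    linarith [h, e7]
  -- PL inequality
  have hPL : 2 * μ * (F w - F wstar) ≤ ‖g‖ ^ 2 := by
    have h := hsc wstar w
    rw [← hg] at h
    have hCS : -(‖wstar - w‖ * ‖g‖) ≤ ⟪wstar - w, g⟫ := by
      have h1 := abs_real_inner_le_norm (wstar - w) g
      have h2 := abs_le.mp h1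
      linarith [h2.1]
    have h2 : F w - F wstar ≤ ‖wstar - w‖ * ‖g‖ - μ/2 * ‖wstar - w‖ ^ 2 := by
      linarith [h, hCS]
    nlinarith [h2, sq_nonneg (μ * ‖wstar - w‖ - ‖g‖), hμ]
  -- final combination
  have hgap : 0 ≤ F w - F wstar := sub_nonneg.mpr (hmin w)
  have hc : 0 ≤ 1 - 4*A*ξ2/((Nf:ℝ)+Nc)^2 := by
    rw [sub_nonneg, div_le_one (by positivity)]
    calc 4*A*ξ2 ≤ 4*A*(((Nf:ℝ)+Nc)^2/(4*A)) :=
          mul_le_mul_of_nonneg_left hξ2A (by positivity)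
      _ = ((Nf:ℝ)+Nc)^2 := by field_simp
  have key : (1 - 4*A*ξ2/((Nf:ℝ)+Nc)^2) * (2 * μ * (F w - F wstar))
      ≤ (1 - 4*A*ξ2/((Nf:ℝ)+Nc)^2) * ‖g‖ ^ 2 := mul_le_mul_of_nonneg_left hPL hc
  have key2 : (1/(2*L)) * ((1 - 4*A*ξ2/((Nf:ℝ)+Nc)^2) * (2 * μ * (F w - F wstar)))
      ≤ (1/(2*L)) * ((1 - 4*A*ξ2/((Nf:ℝ)+Nc)^2) * ‖g‖ ^ 2) :=
    mul_le_mul_of_nonneg_left key (by positivity)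
  have hdev2 : 1/(2*L) * ‖ghat - g‖ ^ 2
      ≤ 1/(2*L) * ((4*A/((Nf:ℝ)+Nc)^2) * G2 + 2*a1^2*ε) :=
    mul_le_mul_of_nonneg_left hdevtot (by positivity)
  have step1 : F (w - (1/L) • ghat) - F wstar ≤ (F w - F wstar) - 1/(2*L) * ‖g‖ ^ 2
      + 1/(2*L) * ((4*A/((Nf:ℝ)+Nc)^2) * G2 + 2*a1^2*ε) := by
    linarith [hdesc, hdev2]
  have hring : (F w - F wstar) - 1/(2*L) * ‖g‖ ^ 2
        + 1/(2*L) * ((4*A/((Nf:ℝ)+Nc)^2) * (ξ1 + ξ2 * ‖g‖ ^ 2) + 2*a1^2*ε)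
        - (ρ1 * (F w - F wstar) + ρ2 + a1 ^ 2 / L * ε)
      = (1/(2*L)) * ((1 - 4*A*ξ2/((Nf:ℝ)+Nc)^2) * (2 * μ * (F w - F wstar)))
        - (1/(2*L)) * ((1 - 4*A*ξ2/((Nf:ℝ)+Nc)^2) * ‖g‖ ^ 2) := by
    rw [hρ1, hρ2]
    field_simp
    ring
  rw [hG2] at step1
  linarith [step1, key2, hring]
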